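/- Let L = (l₁, l₂, l₃) be a nonzero integer vector and m, n integers with n ≠ 0. Then the rotation about axis L by angle θ = arccos((m² − n²|L|²)/(m² + n²|L|²)) has all rational entries, i.e., lies in SO(3, ℚ). -/

import Mathlib

open Matrix

/-- A vector in ℝ³ with all integer entries, i.e. an element of ℤ³ ⊂ ℝ³. -/
def IsIntVec (v : Fin 3 → ℝ) : Prop := ∀ i, ∃ n : ℤ, v i = (n : ℝ)

/-- A 3×3 real matrix with all rational entries. -/
def IsRatMat (R : Matrix (Fin 3) (Fin 3) ℝ) : Prop := ∀ i j, ∃ q : ℚ, R i j = (q : ℝ)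

/-- R is a rotation: orthogonal with determinant one. -/
def IsSO3 (R : Matrix (Fin 3) (Fin 3) ℝ) : Prop :=
  R ∈ Matrix.orthogonalGroup (Fin 3) ℝ ∧ R.det = 1

/-- Membership in ℤ³ ∩ R·ℤ³. -/
def InMoire (R : Matrix (Fin 3) (Fin 3) ℝ) (u : Fin 3 → ℝ) : Prop :=
  IsIntVec u ∧ ∃ a : Fin 3 → ℝ, IsIntVec a ∧ R.mulVec a = u

lemma rodrigues_aux_orth (c s : ℝ) (e : Fin 3 → ℝ) (h1 : s^2 + c^2 = 1)
    (h2 : e 0^2 + e 1^2 + e 2^2 = 1) :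
    (c • (1 : Matrix (Fin 3) (Fin 3) ℝ) + (1-c) • vecMulVec e e
      + s • !![0, -e 2, e 1; e 2, 0, -e 0; -e 1, e 0, 0]) *
    star (c • (1 : Matrix (Fin 3) (Fin 3) ℝ) + (1-c) • vecMulVec e e
      + s • !![0, -e 2, e 1; e 2, 0, -e 0; -e 1, e 0, 0]) = 1 := by
  ext i j
  fin_cases i <;> fin_cases j <;>
    simp [Matrix.mul_apply, Fin.sum_univ_three, Matrix.one_apply, vecMulVec_apply,
      Matrix.star_apply, Matrix.add_apply, Matrix.smul_apply, smul_eq_mul]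
  · linear_combination ((1) + (-1)*c^2 + (1)*e 0^2 + (-2)*e 0^2*c + (1)*e 0^2*c^2) * h2 + ((1)*e 2^2 + (1)*e 1^2) * h1
  · linear_combination ((1)*e 0*e 1 + (-2)*e 0*e 1*c + (1)*e 0*e 1*c^2) * h2 + ((-1)*e 0*e 1) * h1
  · linear_combination ((1)*e 0*e 2 + (-2)*e 0*e 2*c + (1)*e 0*e 2*c^2) * h2 + ((-1)*e 0*e 2) * h1
  · linear_combination ((1)*e 0*e 1 + (-2)*e 0*e 1*c + (1)*e 0*e 1*c^2) * h2 + ((-1)*e 0*e 1) * h1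
  · linear_combination ((1) + (-1)*c^2 + (1)*e 1^2 + (-2)*e 1^2*c + (1)*e 1^2*c^2) * h2 + ((1)*e 2^2 + (1)*e 0^2) * h1
  · linear_combination ((1)*e 1*e 2 + (-2)*e 1*e 2*c + (1)*e 1*e 2*c^2) * h2 + ((-1)*e 1*e 2) * h1
  · linear_combination ((1)*e 0*e 2 + (-2)*e 0*e 2*c + (1)*e 0*e 2*c^2) * h2 + ((-1)*e 0*e 2) * h1
  · linear_combination ((1)*e 1*e 2 + (-2)*e 1*e 2*c + (1)*e 1*e 2*c^2) * h2 + ((-1)*e 1*e 2) * h1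
  · linear_combination ((1) + (-1)*c^2 + (1)*e 2^2 + (-2)*e 2^2*c + (1)*e 2^2*c^2) * h2 + ((1)*e 1^2 + (1)*e 0^2) * h1

lemma rodrigues_aux_det (c s : ℝ) (e : Fin 3 → ℝ) (h1 : s^2 + c^2 = 1)
    (h2 : e 0^2 + e 1^2 + e 2^2 = 1) :
    (c • (1 : Matrix (Fin 3) (Fin 3) ℝ) + (1-c) • vecMulVec e e
      + s • !![0, -e 2, e 1; e 2, 0, -e 0; -e 1, e 0, 0]).det = 1 := by
  rw [Matrix.det_fin_three]
  simp [Matrix.one_apply, vecMulVec_apply, Matrix.add_apply, Matrix.smul_apply, smul_eq_mul]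
  linear_combination ((1) + (-1)*c^3 + (1)*e 2^2 + (-1)*e 2^2*c + (-1)*e 2^2*c^2 + (1)*e 2^2*c^3 + (1)*e 1^2 + (-1)*e 1^2*c + (-1)*e 1^2*c^2 + (1)*e 1^2*c^3 + (1)*e 0^2 + (-1)*e 0^2*c + (-1)*e 0^2*c^2 + (1)*e 0^2*c^3) * h2 + ((1)*e 2^2*c + (1)*e 2^4 + (-1)*e 2^4*c + (1)*e 1^2*c + (2)*e 1^2*e 2^2 + (-2)*e 1^2*e 2^2*c + (1)*e 1^4 + (-1)*e 1^4*c + (1)*e 0^2*c + (2)*e 0^2*e 2^2 + (-2)*e 0^2*e 2^2*c + (2)*e 0^2*e 1^2 + (-2)*e 0^2*e 1^2*c + (1)*e 0^4 + (-1)*e 0^4*c) * h1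

set_option maxHeartbeats 1600000 in
/-- Rodrigues rotation about an integer axis L by θ = arccos((m²−n²|L|²)/(m²+n²|L|²))
is a rational special orthogonal matrix. -/
theorem rodrigues_rational_rotation (l : Fin 3 → ℤ) (hl : l ≠ 0)
    (m n : ℤ) (hn : n ≠ 0) :
    let L : Fin 3 → ℝ := fun i => (l i : ℝ)
    let L2 : ℝ := L 0 ^ 2 + L 1 ^ 2 + L 2 ^ 2
    let e : Fin 3 → ℝ := (Real.sqrt L2)⁻¹ • L
    let θ : ℝ := Real.arccos (((m : ℝ) ^ 2 - (n : ℝ) ^ 2 * L2) / ((m : ℝ) ^ 2 + (n : ℝ) ^ 2 * L2))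
    let K : Matrix (Fin 3) (Fin 3) ℝ := !![0, -e 2, e 1; e 2, 0, -e 0; -e 1, e 0, 0]
    let R : Matrix (Fin 3) (Fin 3) ℝ :=
      Real.cos θ • (1 : Matrix (Fin 3) (Fin 3) ℝ)
        + (1 - Real.cos θ) • vecMulVec e e + Real.sin θ • K
    IsRatMat R ∧ IsSO3 R := by
  intro L L2 e θ K R
  have hlex : l 0 ≠ 0 ∨ l 1 ≠ 0 ∨ l 2 ≠ 0 := by
    by_contra h
    push_neg at h
    exact hl (funext fun i => by fin_cases i <;> simp [h.1, h.2.1, h.2.2])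
  have hL2pos : 0 < L2 := by
    rcases hlex with h|h|h <;>
      · have : ((l _ : ℤ):ℝ) ≠ 0 := Int.cast_ne_zero.mpr h
        have := pow_pos (abs_pos.mpr this) 2
        simp only [L2, L]
        nlinarith [sq_abs ((l 0:ℝ)), sq_abs ((l 1:ℝ)), sq_abs ((l 2:ℝ)),
          sq_nonneg ((l 0 : ℝ)), sq_nonneg ((l 1 : ℝ)), sq_nonneg ((l 2 : ℝ))]
  have hnR : ((n:ℝ)) ≠ 0 := Int.cast_ne_zero.mpr hn
  have hD : (0:ℝ) < (m : ℝ) ^ 2 + (n : ℝ) ^ 2 * L2 := by positivity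
  have hS2 : Real.sqrt L2 ^ 2 = L2 := Real.sq_sqrt hL2pos.le
  have hSpos : 0 < Real.sqrt L2 := Real.sqrt_pos.mpr hL2pos
  have hc : Real.cos θ = ((m : ℝ) ^ 2 - (n : ℝ) ^ 2 * L2) / ((m : ℝ) ^ 2 + (n : ℝ) ^ 2 * L2) := by
    apply Real.cos_arccos
    · rw [le_div_iff₀ hD]; nlinarith
    · rw [div_le_one hD]; nlinarith
  have hs : Real.sin θ = 2 * |(m:ℝ) * (n:ℝ)| * Real.sqrt L2 / ((m : ℝ) ^ 2 + (n : ℝ) ^ 2 * L2) := by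
    have h1 : 1 - (((m : ℝ) ^ 2 - (n : ℝ) ^ 2 * L2) / ((m : ℝ) ^ 2 + (n : ℝ) ^ 2 * L2))^2
        = (2 * |(m:ℝ) * (n:ℝ)| * Real.sqrt L2 / ((m : ℝ) ^ 2 + (n : ℝ) ^ 2 * L2))^2 := by
      rw [div_pow, div_pow, mul_pow, mul_pow, sq_abs, hS2]
      field_simp
      ring
    show Real.sin (Real.arccos _) = _
    rw [Real.sin_arccos, h1]
    exact Real.sqrt_sq (by positivity)
  have hee : ∀ i j : Fin 3, e i * e j = L i * L j / L2 := by
    intro i j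
    show (Real.sqrt L2)⁻¹ * L i * ((Real.sqrt L2)⁻¹ * L j) = _
    rw [eq_div_iff hL2pos.ne', ← hS2]
    field_simp
    rw [Real.sqrt_sq hSpos.le]
  have hse : ∀ k, Real.sin θ * e k = 2 * ((|m * n| : ℤ):ℝ) * L k / ((m : ℝ) ^ 2 + (n : ℝ) ^ 2 * L2) := by
    intro k
    show _ * ((Real.sqrt L2)⁻¹ * L k) = _
    rw [hs]
    have habs : ((|m * n| : ℤ):ℝ) = |(m:ℝ) * (n:ℝ)| := by push_cast; ring_nf
    rw [habs]
    field_simp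
  have hL2 : L2 = ((l 0 ^ 2 + l 1 ^ 2 + l 2 ^ 2 : ℤ) : ℝ) := by simp only [L2, L]; push_cast; ring
  have hDR : (m:ℝ)^2 + (n:ℝ)^2 * ((l 0 ^ 2 + l 1 ^ 2 + l 2 ^ 2 : ℤ) : ℝ) ≠ 0 := by
    rw [← hL2]; exact hD.ne'
  have hL2R : ((l 0:ℝ)^2 + (l 1:ℝ)^2 + (l 2:ℝ)^2) ≠ 0 := hL2pos.ne'
  have hDR' : (m:ℝ)^2 + (n:ℝ)^2 * ((l 0:ℝ)^2 + (l 1:ℝ)^2 + (l 2:ℝ)^2) ≠ 0 := by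
    simpa using hDR
  have hRij : ∀ i j, R i j = Real.cos θ * (if i = j then 1 else 0)
      + (1 - Real.cos θ) * (e i * e j) + Real.sin θ * K i j := by
    intro i j
    simp [R, Matrix.one_apply, vecMulVec_apply]
  have he2 : e 0^2 + e 1^2 + e 2^2 = 1 := by
    have h0 := hee 0 0
    have h1 := hee 1 1
    have h2 := hee 2 2
    rw [pow_two, pow_two, pow_two, h0, h1, h2, ← add_div, ← add_div,
      div_eq_one_iff_eq hL2pos.ne']
    simp only [L2, L]
    ring
  refine ⟨?_, ?_, ?_⟩
  · intro i j
    fin_cases i <;> fin_cases j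
    · refine ⟨((m ^ 2 - n ^ 2 * (l 0^2+l 1^2+l 2^2) + 2 * n ^ 2 * l 0 ^ 2 : ℤ):ℚ) / ((m ^ 2 + n ^ 2 * (l 0 ^ 2 + l 1 ^ 2 + l 2 ^ 2) : ℤ) : ℚ), ?_⟩
      rw [hRij]
      norm_num [K]
      try simp only [mul_neg, mul_zero, add_zero, mul_one]
      rw [hee]
      try rw [hse]
      rw [hc, hL2]
      push_cast
      simp only [L, abs_mul]
      field_simp
      ring
    · refine ⟨((2 * n ^ 2 * l 0 * l 1 - 2 * |m*n| * l 2 : ℤ):ℚ) / ((m ^ 2 + n ^ 2 * (l 0 ^ 2 + l 1 ^ 2 + l 2 ^ 2) : ℤ) : ℚ), ?_⟩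
      rw [hRij]
      norm_num [K]
      try simp only [mul_neg, mul_zero, add_zero, mul_one]
      rw [hee]
      try rw [hse]
      rw [hc, hL2]
      push_cast
      simp only [L, abs_mul]
      field_simp
      ring
    · refine ⟨((2 * n ^ 2 * l 0 * l 2 + 2 * |m*n| * l 1 : ℤ):ℚ) / ((m ^ 2 + n ^ 2 * (l 0 ^ 2 + l 1 ^ 2 + l 2 ^ 2) : ℤ) : ℚ), ?_⟩
      rw [hRij]
      norm_num [K]
      try simp only [mul_neg, mul_zero, add_zero, mul_one]
      rw [hee]
      try rw [hse]
      rw [hc, hL2]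
      push_cast
      simp only [L, abs_mul]
      field_simp
      ring
    · refine ⟨((2 * n ^ 2 * l 0 * l 1 + 2 * |m*n| * l 2 : ℤ):ℚ) / ((m ^ 2 + n ^ 2 * (l 0 ^ 2 + l 1 ^ 2 + l 2 ^ 2) : ℤ) : ℚ), ?_⟩
      rw [hRij]
      norm_num [K]
      try simp only [mul_neg, mul_zero, add_zero, mul_one]
      rw [hee]
      try rw [hse]
      rw [hc, hL2]
      push_cast
      simp only [L, abs_mul]
      field_simp
      ring
    · refine ⟨((m ^ 2 - n ^ 2 * (l 0^2+l 1^2+l 2^2) + 2 * n ^ 2 * l 1 ^ 2 : ℤ):ℚ) / ((m ^ 2 + n ^ 2 * (l 0 ^ 2 + l 1 ^ 2 + l 2 ^ 2) : ℤ) : ℚ), ?_⟩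
      rw [hRij]
      norm_num [K]
      try simp only [mul_neg, mul_zero, add_zero, mul_one]
      rw [hee]
      try rw [hse]
      rw [hc, hL2]
      push_cast
      simp only [L, abs_mul]
      field_simp
      ring
    · refine ⟨((2 * n ^ 2 * l 1 * l 2 - 2 * |m*n| * l 0 : ℤ):ℚ) / ((m ^ 2 + n ^ 2 * (l 0 ^ 2 + l 1 ^ 2 + l 2 ^ 2) : ℤ) : ℚ), ?_⟩
      rw [hRij]
      norm_num [K]
      try simp only [mul_neg, mul_zero, add_zero, mul_one]
      rw [hee]
      try rw [hse]
      rw [hc, hL2]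
      push_cast
      simp only [L, abs_mul]
      field_simp
      ring
    · refine ⟨((2 * n ^ 2 * l 0 * l 2 - 2 * |m*n| * l 1 : ℤ):ℚ) / ((m ^ 2 + n ^ 2 * (l 0 ^ 2 + l 1 ^ 2 + l 2 ^ 2) : ℤ) : ℚ), ?_⟩
      rw [hRij]
      norm_num [K]
      try simp only [mul_neg, mul_zero, add_zero, mul_one]
      rw [hee]
      try rw [hse]
      rw [hc, hL2]
      push_cast
      simp only [L, abs_mul]
      field_simp
      ring
    · refine ⟨((2 * n ^ 2 * l 1 * l 2 + 2 * |m*n| * l 0 : ℤ):ℚ) / ((m ^ 2 + n ^ 2 * (l 0 ^ 2 + l 1 ^ 2 + l 2 ^ 2) : ℤ) : ℚ), ?_⟩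
      rw [hRij]
      norm_num [K]
      try simp only [mul_neg, mul_zero, add_zero, mul_one]
      rw [hee]
      try rw [hse]
      rw [hc, hL2]
      push_cast
      simp only [L, abs_mul]
      field_simp
      ring
    · refine ⟨((m ^ 2 - n ^ 2 * (l 0^2+l 1^2+l 2^2) + 2 * n ^ 2 * l 2 ^ 2 : ℤ):ℚ) / ((m ^ 2 + n ^ 2 * (l 0 ^ 2 + l 1 ^ 2 + l 2 ^ 2) : ℤ) : ℚ), ?_⟩
      rw [hRij]
      norm_num [K]
      try simp only [mul_neg, mul_zero, add_zero, mul_one]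
      rw [hee]
      try rw [hse]
      rw [hc, hL2]
      push_cast
      simp only [L, abs_mul]
      field_simp
      ring
  · rw [Matrix.mem_orthogonalGroup_iff]
    exact rodrigues_aux_orth (Real.cos θ) (Real.sin θ) e (Real.sin_sq_add_cos_sq θ) he2
  · exact rodrigues_aux_det (Real.cos θ) (Real.sin θ) e (Real.sin_sq_add_cos_sq θ) he2
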